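/- Let ρ ∈ (0,1) and suppose a nonnegative sequence w : ℕ → ℝ satisfies w_{t+1} ≤ ρ_{t+1} w_t + c₁ α(t+1)^{3/2} + c₂ α(t+1) ε(t), where ρ_{t+1} = max(1 − μ α(t+1), L α(t+1) − 1), α(t) = α(0)/(1+t) with α(0) ≤ min(1/(2L), μ/(4L²)), and ε(t) ≤ C_γ / t^{1/2−γ} for some γ ∈ (0, 1/2) with μ α(0) > 1/2 − γ. Then w_t ≤ (c₁ α(0)^{3/2} + c₂ α(0) C_γ)/((μ α(0) − 1/2 + γ)) · (1+t)^{−(1/2−γ)} + o((1+t)^{−(1/2−γ)}). -/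

import Mathlib

open Filter Asymptotics

private lemma exists_le_of_drop (u : ℕ → ℝ) (hu : ∀ t, 0 ≤ u t) (η c : ℝ) (hη : 0 < η)
    (T : ℕ) (h : ∀ t, T ≤ t → c < u t → u (t + 1) ≤ u t - η / ((t : ℝ) + 2)) :
    ∃ t₀, T ≤ t₀ ∧ u t₀ ≤ c := by
  by_contra hcon
  push_neg at hcon
  have key : ∀ n : ℕ, u (T + n) ≤
      u T - η / ((T : ℝ) + 2) * ∑ k ∈ Finset.range n, (1 / ((k : ℝ) + 1)) := by
    intro n
    induction n with
    | zero => simp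
    | succ n ih =>
      rw [Finset.sum_range_succ]
      have hTn : T ≤ T + n := Nat.le_add_right _ _
      have h1 := h (T + n) hTn (hcon _ hTn)
      have hb : (0:ℝ) < ((T + n : ℕ) : ℝ) + 2 := by positivity
      have h2 : η / ((T : ℝ) + 2) * (1 / ((n : ℝ) + 1)) ≤ η / (((T + n : ℕ) : ℝ) + 2) := by
        rw [div_mul_div_comm, mul_one]
        apply div_le_div_of_nonneg_left hη.le hb
        push_cast
        nlinarith [Nat.cast_nonneg (α := ℝ) T, Nat.cast_nonneg (α := ℝ) n]
      have h3 : u (T + (n + 1)) = u (T + n + 1) := by rw [Nat.add_assoc]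
      rw [h3]
      linarith
  have hdiv := Real.tendsto_sum_range_one_div_nat_succ_atTop
  obtain ⟨n, hn⟩ := (hdiv.eventually_ge_atTop ((u T + 1) * (((T : ℝ) + 2) / η))).exists
  have hpos : (0:ℝ) < (T : ℝ) + 2 := by positivity
  have hmul : η / ((T : ℝ) + 2) * ((u T + 1) * (((T : ℝ) + 2) / η)) ≤
      η / ((T : ℝ) + 2) * ∑ k ∈ Finset.range n, (1 / ((k : ℝ) + 1)) :=
    mul_le_mul_of_nonneg_left hn (by positivity)
  have heq : η / ((T : ℝ) + 2) * ((u T + 1) * (((T : ℝ) + 2) / η)) = u T + 1 := by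
    field_simp
  have := key n
  have := hu (T + n)
  linarith

set_option maxHeartbeats 2000000 in
theorem wasserstein_rate (w : ℕ → ℝ) (μconst L c₁ c₂ γ Cγ α₀ : ℝ)
    (hμ : 0 < μconst) (hL : 0 < L) (hc₁ : 0 ≤ c₁) (hc₂ : 0 ≤ c₂)
    (hγ : 0 < γ) (hγ' : γ < 1 / 2) (hCγ : 0 < Cγ)
    (hα₀ : 0 < α₀) (hα₀' : α₀ ≤ min (1 / (2 * L)) (μconst / (4 * L ^ 2)))
    (hrate : μconst * α₀ > 1 / 2 - γ)
    (α : ℕ → ℝ) (hα : ∀ t, α t = α₀ / (1 + t))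
    (ρ : ℕ → ℝ) (hρ : ∀ t, ρ t = max (1 - μconst * α t) (L * α t - 1))
    (ε : ℕ → ℝ) (hε : ∀ t : ℕ, 1 ≤ t → ε t ≤ Cγ / (t : ℝ) ^ ((1 : ℝ) / 2 - γ))
    (hw : ∀ t, 0 ≤ w t)
    (hrec : ∀ t : ℕ, w (t + 1) ≤ ρ (t + 1) * w t
      + c₁ * (α (t + 1)) ^ ((3 : ℝ) / 2) + c₂ * α (t + 1) * ε t) :
    ∃ β : ℕ → ℝ,
      (∀ t : ℕ, w t ≤
        (c₁ * α₀ ^ ((3 : ℝ) / 2) + c₂ * α₀ * Cγ) / (μconst * α₀ - 1 / 2 + γ) *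
          ((1 + t : ℝ)) ^ (-((1 : ℝ) / 2 - γ)) + β t) ∧
      β =o[atTop] (fun t : ℕ => ((1 + t : ℝ)) ^ (-((1 : ℝ) / 2 - γ))) := by
  set p : ℝ := 1 / 2 - γ with hpdef
  have hp : 0 < p := by rw [hpdef]; linarith
  have hp1 : p < 1 := by rw [hpdef]; linarith
  set cA : ℝ := c₁ * α₀ ^ ((3 : ℝ) / 2) with hcAdef
  set b₀ : ℝ := c₂ * α₀ * Cγ with hb₀def
  have hcA0 : 0 ≤ cA := mul_nonneg hc₁ (Real.rpow_nonneg hα₀.le _)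
  have hb₀0 : 0 ≤ b₀ := by positivity
  set M : ℝ := (cA + b₀) / (μconst * α₀ - 1 / 2 + γ) with hMdef
  have hD : 0 < μconst * α₀ - p := by linarith [hrate]
  have hden : μconst * α₀ - 1 / 2 + γ = μconst * α₀ - p := by rw [hpdef]; ring
  have hM0 : 0 ≤ M := by
    rw [hMdef, hden]; exact div_nonneg (by positivity) hD.le
  have hMd : M * (μconst * α₀ - p) = cA + b₀ := by
    rw [hMdef, hden]; field_simp
  set u : ℕ → ℝ := fun t => w t * ((1 + t : ℝ)) ^ p with hudef
  have hu0 : ∀ t, 0 ≤ u t := fun t =>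
    mul_nonneg (hw t) (Real.rpow_nonneg (by positivity) _)
  clear_value p cA b₀ M u
  have hsT : Tendsto (fun t : ℕ => ((t : ℝ) + 2)) atTop atTop :=
    tendsto_atTop_add_const_right _ 2 tendsto_natCast_atTop_atTop
  have main : ∀ δ : ℝ, 0 < δ → ∀ᶠ t in atTop, u t ≤ M + δ := by
    intro δ hδ
    set θ : ℝ := min ((μconst * α₀ - p) / 2)
      ((μconst * α₀ - p) * δ / (2 * (M + δ + 1))) with hθdef
    have hMδ1 : (0:ℝ) < M + δ + 1 := by linarith
    have hθpos : 0 < θ :=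
      lt_min (by linarith) (div_pos (mul_pos hD hδ) (by linarith))
    have hθD : θ ≤ (μconst * α₀ - p) / 2 := min_le_left _ _
    have hθ2 : θ * (M + δ + 1) ≤ (μconst * α₀ - p) * δ / 2 := by
      have h1 := min_le_right ((μconst * α₀ - p) / 2)
        ((μconst * α₀ - p) * δ / (2 * (M + δ + 1)))
      rw [← hθdef, le_div_iff₀ (by linarith : (0:ℝ) < 2 * (M + δ + 1))] at h1
      linarith
    set κ : ℝ := μconst * α₀ - p - θ with hκdef
    have hκpos : 0 < κ := by rw [hκdef]; linarith
    set η : ℝ := κ * (M + δ) - (b₀ + θ) with hηdef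
    clear_value θ κ η
    have hηpos : 0 < η := by
      rw [hηdef, hκdef]
      linarith only [hMd, hθ2, mul_pos hD hδ, hcA0]
    have hkey : ∀ᶠ t : ℕ in atTop,
        u (t + 1) ≤ (1 - κ / ((t : ℝ) + 2)) * u t + (b₀ + θ) / ((t : ℝ) + 2) := by
      have F5 : ∀ᶠ t : ℕ in atTop, cA * ((t : ℝ) + 2) ^ (-γ) < θ / 2 := by
        have ht0 : Tendsto (fun t : ℕ => cA * ((t : ℝ) + 2) ^ (-γ)) atTop (nhds (cA * 0)) :=
          Tendsto.const_mul _ ((tendsto_rpow_neg_atTop hγ).comp hsT)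
        rw [mul_zero] at ht0
        exact ht0.eventually_lt_const (by positivity)
      filter_upwards [hsT.eventually_ge_atTop ((L + μconst) * α₀ / 2),
        hsT.eventually_ge_atTop (μconst * α₀),
        hsT.eventually_ge_atTop ((μconst * α₀ - κ * (1 + p)) / θ),
        F5,
        tendsto_natCast_atTop_atTop.eventually_ge_atTop (4 * b₀ / θ),
        eventually_ge_atTop 1] with t h1 h2 h4 h5 h6 h7
      set s : ℝ := (t : ℝ) + 2 with hsdef
      clear_value s
      have htnn : (0:ℝ) ≤ (t : ℝ) := Nat.cast_nonneg t
      have hs0 : (0:ℝ) < s := by rw [hsdef]; linarith only [htnn]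
      have hs1 : (0:ℝ) < s - 1 := by rw [hsdef]; linarith only [htnn]
      have hs2 : (2:ℝ) ≤ s := by rw [hsdef]; linarith only [htnn]
      have ht1 : (1:ℝ) ≤ (t : ℝ) := by exact_mod_cast h7
      have ht0' : (0:ℝ) < (t : ℝ) := by linarith only [ht1]
      have htp : (0:ℝ) < (t : ℝ) ^ p := Real.rpow_pos_of_pos ht0' _
      -- step size
      have hα1 : α (t + 1) = α₀ / s := by rw [hα, hsdef]; push_cast; ring
      -- contraction factor bound
      have hρb : ρ (t + 1) ≤ 1 - μconst * α₀ / s := by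
        rw [hρ, hα1]
        apply max_le
        · have e : μconst * (α₀ / s) = μconst * α₀ / s := by ring
          rw [e]
        · have h2s : (L + μconst) * α₀ ≤ 2 * s := by linarith only [h1]
          have hdd : (L + μconst) * α₀ / s ≤ 2 := by
            rw [div_le_iff₀ hs0]; linarith only [h2s]
          have e2 : L * (α₀ / s) + μconst * α₀ / s = (L + μconst) * α₀ / s := by ring
          linarith only [hdd, e2]
      -- one-step recursion bound
      have m1 : ρ (t + 1) * w t ≤ (1 - μconst * α₀ / s) * w t :=
        mul_le_mul_of_nonneg_right hρb (hw t)
      have m2 : c₂ * (α₀ / s) * ε t ≤ c₂ * (α₀ / s) * (Cγ / (t : ℝ) ^ p) :=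
        mul_le_mul_of_nonneg_left (hε t h7) (mul_nonneg hc₂ (by positivity))
      have hr := hrec t
      rw [hα1] at hr
      have hw1 : w (t + 1) ≤ (1 - μconst * α₀ / s) * w t
          + c₁ * (α₀ / s) ^ ((3:ℝ) / 2) + c₂ * (α₀ / s) * (Cγ / (t : ℝ) ^ p) := by
        linarith only [hr, m1, m2]
      -- express u in terms of w
      have hu1 : u (t + 1) = w (t + 1) * s ^ p := by
        have e : ((1:ℝ) + ((t + 1 : ℕ) : ℝ)) = s := by rw [hsdef]; push_cast; ring
        simp only [hudef]
        rw [e]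
      have hu2 : u t = w t * (s - 1) ^ p := by
        have e : ((1:ℝ) + (t : ℝ)) = s - 1 := by rw [hsdef]; ring
        simp only [hudef]
        rw [e]
      -- core contraction inequality
      have hz : (0:ℝ) < 1 - p / (s - 1) := by
        have h : p / (s - 1) < 1 := by rw [div_lt_one hs1]; linarith only [hp1, hs2]
        linarith only [h]
      have hyq : (0:ℝ) < (s - 1) / s := div_pos hs1 hs0
      have hxq : (0:ℝ) < s / (s - 1) := div_pos hs0 hs1
      have hlog : Real.log (s / (s - 1)) ≤ 1 / (s - 1) := by
        have h := Real.log_le_sub_one_of_pos hxq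
        have e : s / (s - 1) - 1 = 1 / (s - 1) := by field_simp; ring
        linarith only [h, e]
      have hyp : 1 - p / (s - 1) ≤ ((s - 1) / s) ^ p := by
        rw [Real.rpow_def_of_pos hyq]
        have hexp := Real.add_one_le_exp (Real.log ((s - 1) / s) * p)
        have hlog2 : -(1 / (s - 1)) ≤ Real.log ((s - 1) / s) := by
          have e : (s - 1) / s = (s / (s - 1))⁻¹ := by rw [inv_div]
          rw [e, Real.log_inv]
          linarith only [hlog]
        have hml := mul_le_mul_of_nonneg_right hlog2 hp.le
        have eml : -(1 / (s - 1)) * p = -(p / (s - 1)) := by ring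
        rw [eml] at hml
        linarith only [hexp, hml]
      have hinv : (s / (s - 1)) ^ p ≤ (1 - p / (s - 1))⁻¹ := by
        have e : s / (s - 1) = ((s - 1) / s)⁻¹ := by rw [inv_div]
        rw [e, Real.inv_rpow hyq.le]
        exact inv_anti₀ hz hyp
      have hcoef : (0:ℝ) ≤ 1 - μconst * α₀ / s := by
        rw [sub_nonneg, div_le_one hs0]; exact h2
      have h4' : μconst * α₀ - κ * (1 + p) ≤ θ * s := by
        rw [div_le_iff₀ hθpos] at h4; linarith only [h4]
      have hA : (1 - μconst * α₀ / s) * (s / (s - 1)) ^ p ≤ 1 - κ / s := by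
        have step1 : (1 - μconst * α₀ / s) * (s / (s - 1)) ^ p
            ≤ (1 - μconst * α₀ / s) * (1 - p / (s - 1))⁻¹ :=
          mul_le_mul_of_nonneg_left hinv hcoef
        have step2 : (1 - μconst * α₀ / s) * (1 - p / (s - 1))⁻¹ ≤ 1 - κ / s := by
          rw [← div_eq_mul_inv, div_le_iff₀ hz]
          have e1 : (1 - μconst * α₀ / s) * (s * (s - 1)) = (s - μconst * α₀) * (s - 1) := by
            field_simp
            try ring
          have e2 : ((1 - κ / s) * (1 - p / (s - 1))) * (s * (s - 1)) = (s - κ) * (s - 1 - p) := by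
            field_simp
            try ring
          have hclear : (s - μconst * α₀) * (s - 1) ≤ (s - κ) * (s - 1 - p) := by
            rw [hκdef] at h4' ⊢
            linarith only [h4']
          rw [← e1, ← e2] at hclear
          exact le_of_mul_le_mul_right hclear (by positivity)
        exact step1.trans step2
      -- term 1
      have erw : w t * s ^ p = (s / (s - 1)) ^ p * u t := by
        rw [hu2, Real.div_rpow hs0.le hs1.le]
        have hne : ((s - 1):ℝ) ^ p ≠ 0 := (Real.rpow_pos_of_pos hs1 p).ne'
        field_simp
      have T1 : (1 - μconst * α₀ / s) * w t * s ^ p ≤ (1 - κ / s) * u t := by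
        calc (1 - μconst * α₀ / s) * w t * s ^ p
            = ((1 - μconst * α₀ / s) * (s / (s - 1)) ^ p) * u t := by
              rw [mul_assoc, erw]; ring
          _ ≤ (1 - κ / s) * u t := mul_le_mul_of_nonneg_right hA (hu0 t)
      -- term 2
      have T2 : c₁ * (α₀ / s) ^ ((3:ℝ) / 2) * s ^ p ≤ (θ / 2) / s := by
        rw [le_div_iff₀ hs0]
        have key2 : (α₀ / s) ^ ((3:ℝ) / 2) * s ^ p * s = α₀ ^ ((3:ℝ) / 2) * s ^ (-γ) := by
          rw [Real.div_rpow hα₀.le hs0.le, mul_assoc, ← Real.rpow_add_one hs0.ne' p,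
            div_mul_eq_mul_div, mul_div_assoc, ← Real.rpow_sub hs0]
          congr 1
          rw [hpdef]; ring
        calc c₁ * (α₀ / s) ^ ((3:ℝ) / 2) * s ^ p * s
            = c₁ * ((α₀ / s) ^ ((3:ℝ) / 2) * s ^ p * s) := by ring
          _ = c₁ * (α₀ ^ ((3:ℝ) / 2) * s ^ (-γ)) := by rw [key2]
          _ = cA * s ^ (-γ) := by rw [hcAdef]; ring
          _ ≤ θ / 2 := h5.le
      -- term 3
      have T3 : c₂ * (α₀ / s) * (Cγ / (t : ℝ) ^ p) * s ^ p ≤ (b₀ + θ / 2) / s := by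
        have e : c₂ * (α₀ / s) * (Cγ / (t : ℝ) ^ p) * s ^ p = (b₀ / s) * (s ^ p / (t : ℝ) ^ p) := by
          rw [hb₀def]
          field_simp
          try ring
        have e2 : s ^ p / (t : ℝ) ^ p = (s / (t : ℝ)) ^ p :=
          (Real.div_rpow hs0.le (Nat.cast_nonneg t) p).symm
        have hle1 : (s / (t : ℝ)) ^ p ≤ s / (t : ℝ) := by
          have h1t : (1:ℝ) ≤ s / (t : ℝ) := by
            rw [le_div_iff₀ ht0', one_mul, hsdef]; linarith only []
          calc (s / (t : ℝ)) ^ p ≤ (s / (t : ℝ)) ^ (1:ℝ) :=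
              Real.rpow_le_rpow_of_exponent_le h1t hp1.le
            _ = s / (t : ℝ) := Real.rpow_one _
        have h6' : 2 * b₀ ≤ (θ / 2) * (t : ℝ) := by
          have hh := mul_le_mul_of_nonneg_left h6 (half_pos hθpos).le
          have hsh : (θ / 2) * (4 * b₀ / θ) = 2 * b₀ := by
            field_simp
            try ring
          rwa [hsh] at hh
        calc c₂ * (α₀ / s) * (Cγ / (t : ℝ) ^ p) * s ^ p = (b₀ / s) * (s / (t : ℝ)) ^ p := by
              rw [e, e2]
          _ ≤ (b₀ / s) * (s / (t : ℝ)) :=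
              mul_le_mul_of_nonneg_left hle1 (div_nonneg hb₀0 hs0.le)
          _ = b₀ / (t : ℝ) := by field_simp
          _ ≤ (b₀ + θ / 2) / s := by
              rw [div_le_div_iff₀ ht0' hs0, hsdef]
              linarith only [h6']
      -- combine
      have hsp : (0:ℝ) ≤ s ^ p := (Real.rpow_pos_of_pos hs0 p).le
      have hmul := mul_le_mul_of_nonneg_right hw1 hsp
      rw [hu1]
      calc w (t + 1) * s ^ p
          ≤ ((1 - μconst * α₀ / s) * w t + c₁ * (α₀ / s) ^ ((3:ℝ) / 2)
              + c₂ * (α₀ / s) * (Cγ / (t : ℝ) ^ p)) * s ^ p := hmul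
        _ = (1 - μconst * α₀ / s) * w t * s ^ p + c₁ * (α₀ / s) ^ ((3:ℝ) / 2) * s ^ p
              + c₂ * (α₀ / s) * (Cγ / (t : ℝ) ^ p) * s ^ p := by ring
        _ ≤ (1 - κ / s) * u t + (θ / 2) / s + (b₀ + θ / 2) / s := by
              linarith only [T1, T2, T3]
        _ = (1 - κ / s) * u t + (b₀ + θ) / s := by ring
    obtain ⟨T, hT⟩ := eventually_atTop.1 (hkey.and (hsT.eventually_ge_atTop κ))
    have hstep_drop : ∀ t, T ≤ t → M + δ < u t → u (t + 1) ≤ u t - η / ((t : ℝ) + 2) := by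
      intro t ht hlt
      obtain ⟨hk, hκs⟩ := hT t ht
      have hs0 : (0:ℝ) < (t : ℝ) + 2 := by positivity
      have e : (1 - κ / ((t : ℝ) + 2)) * u t + (b₀ + θ) / ((t : ℝ) + 2)
          = u t - (κ * u t - (b₀ + θ)) / ((t : ℝ) + 2) := by
        field_simp
        try ring
      have hge : η ≤ κ * u t - (b₀ + θ) := by
        rw [hηdef]
        linarith only [mul_le_mul_of_nonneg_left hlt.le hκpos.le]
      have hdiv : η / ((t : ℝ) + 2) ≤ (κ * u t - (b₀ + θ)) / ((t : ℝ) + 2) := by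
        gcongr
      rw [e] at hk
      linarith only [hk, hdiv]
    have hstep_stay : ∀ t, T ≤ t → u t ≤ M + δ → u (t + 1) ≤ M + δ := by
      intro t ht hle
      obtain ⟨hk, hκs⟩ := hT t ht
      have hs0 : (0:ℝ) < (t : ℝ) + 2 := by positivity
      have h1 : (1 - κ / ((t : ℝ) + 2)) * u t ≤ (1 - κ / ((t : ℝ) + 2)) * (M + δ) := by
        apply mul_le_mul_of_nonneg_left hle
        rw [sub_nonneg, div_le_one hs0]; exact hκs
      have e : (1 - κ / ((t : ℝ) + 2)) * (M + δ) + (b₀ + θ) / ((t : ℝ) + 2)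
          = (M + δ) - η / ((t : ℝ) + 2) := by
        rw [hηdef]
        field_simp
        try ring
      have hnn : 0 ≤ η / ((t : ℝ) + 2) := div_nonneg hηpos.le hs0.le
      linarith only [hk, h1, e, hnn]
    obtain ⟨t₀, ht₀T, ht₀⟩ := exists_le_of_drop u hu0 η (M + δ) hηpos T hstep_drop
    rw [eventually_atTop]
    refine ⟨t₀, fun t ht => ?_⟩
    induction t, ht using Nat.le_induction with
    | base => exact ht₀
    | succ n hn ih => exact hstep_stay n (le_trans ht₀T hn) ih
  -- construct β
  refine ⟨fun t => max (w t - M * ((1 + t : ℝ)) ^ (-p)) 0, fun t => ?_, ?_⟩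
  · have h := le_max_left (w t - M * ((1 + t : ℝ)) ^ (-p)) 0
    linarith
  · rw [isLittleO_iff]
    intro cc hcc
    filter_upwards [main cc hcc] with t ht
    have hbase : (0:ℝ) < 1 + (t : ℝ) := by positivity
    have hx : (0:ℝ) < ((1 + t : ℝ)) ^ (-p) := Real.rpow_pos_of_pos hbase _
    rw [Real.norm_eq_abs, Real.norm_eq_abs, abs_of_nonneg (le_max_right _ _),
      abs_of_nonneg hx.le]
    apply max_le _ (by positivity)
    simp only [hudef] at ht
    have ht' : w t * ((1 + t : ℝ)) ^ p ≤ M + cc := ht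
    have e : ((1 + t : ℝ)) ^ p * ((1 + t : ℝ)) ^ (-p) = 1 := by
      rw [← Real.rpow_add hbase]
      norm_num
    have h2 := mul_le_mul_of_nonneg_right ht' hx.le
    rw [mul_assoc, e, mul_one] at h2
    linarith only [h2, hx.le]
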